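/- Let F₂ be the free group on two generators a, b, and let φ : F₂ → ℤ be the homomorphism with φ(a) = φ(b) = 1. Let Γ = {(h₁, h₂) ∈ F₂ × F₂ : φ(h₁) = φ(h₂)}. Then Γ is a finitely generated subgroup of F₂ × F₂, and Γ is undistorted: with respect to some (any) finite generating set of Γ and the standard generating set of F₂ × F₂, the inclusion Γ → F₂ × F₂ is a quasi-isometric embedding, i.e., there is a constant C ≥ 1 such that the word length of γ ∈ Γ in Γ is at most C times its word length in F₂ × F₂ plus C. -/

import Mathlib

/-- The standard generating set of `F₂ × F₂`. -/
def stdGens : Set (FreeGroup Bool × FreeGroup Bool) :=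
  {(FreeGroup.of true, 1), (FreeGroup.of false, 1),
   (1, FreeGroup.of true), (1, FreeGroup.of false)}

/-- `g` has word length at most `n` with respect to the generating set `S`. -/
def InWordBall {G : Type*} [Group G] (S : Set G) (n : ℕ) (g : G) : Prop :=
  ∃ l : List G, l.length ≤ n ∧ (∀ x ∈ l, x ∈ S ∨ x⁻¹ ∈ S) ∧ l.prod = g

/-- The homomorphism `F₂ → ℤ` sending both generators to `1`. -/
def phi2 : FreeGroup Bool →* Multiplicative ℤ :=
  FreeGroup.lift fun _ => Multiplicative.ofAdd 1

/-- The Stallings–Bieri fiber product `Γ = {(h₁,h₂) : φ(h₁) = φ(h₂)}`. -/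
def SB : Subgroup (FreeGroup Bool × FreeGroup Bool) :=
  ((phi2.comp (MonoidHom.fst _ _)) / (phi2.comp (MonoidHom.snd _ _))).ker

/-! ### Auxiliary material -/

namespace SBAux

abbrev F2 := FreeGroup Bool
abbrev G2 := F2 × F2

noncomputable def ga : F2 := FreeGroup.of true
noncomputable def gb : F2 := FreeGroup.of false

lemma phi2_of (i : Bool) : phi2 (FreeGroup.of i) = Multiplicative.ofAdd 1 := by
  simp [phi2]

lemma mem_SB {g : G2} : g ∈ SB ↔ phi2 g.1 = phi2 g.2 := by
  simp [SB, MonoidHom.mem_ker, MonoidHom.div_apply, div_eq_one]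

/-- The homomorphism `u ↦ (u, a^{φ u})`. -/
noncomputable def psi1 : F2 →* G2 := FreeGroup.lift fun i => ((FreeGroup.of i : F2), ga)

/-- The homomorphism `v ↦ (a^{φ v}, v)`. -/
noncomputable def psi2 : F2 →* G2 := FreeGroup.lift fun i => (ga, (FreeGroup.of i : F2))

lemma fst_psi1 (u : F2) : (psi1 u).1 = u := by
  have h : (MonoidHom.fst F2 F2).comp psi1 = MonoidHom.id F2 := by
    apply FreeGroup.ext_hom
    intro i
    simp [psi1]
  exact DFunLike.congr_fun h u

lemma snd_psi1 (u : F2) : (psi1 u).2 = ga ^ (Multiplicative.toAdd (phi2 u)) := by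
  have h : (MonoidHom.snd F2 F2).comp psi1 = (zpowersHom F2 ga).comp phi2 := by
    apply FreeGroup.ext_hom
    intro i
    simp [psi1, phi2, ga]
  simpa [zpowersHom_apply] using DFunLike.congr_fun h u

lemma snd_psi2 (v : F2) : (psi2 v).2 = v := by
  have h : (MonoidHom.snd F2 F2).comp psi2 = MonoidHom.id F2 := by
    apply FreeGroup.ext_hom
    intro i
    simp [psi2]
  exact DFunLike.congr_fun h v

lemma fst_psi2 (v : F2) : (psi2 v).1 = ga ^ (Multiplicative.toAdd (phi2 v)) := by
  have h : (MonoidHom.fst F2 F2).comp psi2 = (zpowersHom F2 ga).comp phi2 := by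
    apply FreeGroup.ext_hom
    intro i
    simp [psi2, phi2, ga]
  simpa [zpowersHom_apply] using DFunLike.congr_fun h v

lemma phi2_ga_pow (k : ℤ) : phi2 (ga ^ k) = Multiplicative.ofAdd k := by
  rw [map_zpow, ga, phi2_of]
  simp [← ofAdd_zsmul]

lemma psi1_mem (u : F2) : psi1 u ∈ SB := by
  rw [mem_SB, fst_psi1, snd_psi1, phi2_ga_pow]
  simp

lemma psi2_mem (v : F2) : psi2 v ∈ SB := by
  rw [mem_SB, snd_psi2, fst_psi2, phi2_ga_pow]
  simp

/-- `psi1` corestricted to `SB`. -/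
noncomputable def psi1' : F2 →* SB := psi1.codRestrict SB psi1_mem

noncomputable def psi2' : F2 →* SB := psi2.codRestrict SB psi2_mem

@[simp] lemma coe_psi1' (u : F2) : ((psi1' u : SB) : G2) = psi1 u := rfl
@[simp] lemma coe_psi2' (v : F2) : ((psi2' v : SB) : G2) = psi2 v := rfl

/-- The three generators of `SB`. -/
noncomputable def tE : SB := psi1' ga
noncomputable def sE : SB := psi1' gb * (psi1' ga)⁻¹
noncomputable def s'E : SB := psi2' gb * (psi2' ga)⁻¹

/-- Our finite generating set. -/
noncomputable def Sgen : Finset SB := {tE, sE, s'E}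

/-! ### InWordBall lemmas -/

section IWB

variable {G : Type*} [Group G] {S : Set G}

lemma iwb_one (n : ℕ) : InWordBall S n (1 : G) :=
  ⟨[], by simp⟩

lemma iwb_mono {m n : ℕ} {g : G} (h : m ≤ n) (hg : InWordBall S m g) : InWordBall S n g := by
  obtain ⟨l, hl, hmem, hprod⟩ := hg
  exact ⟨l, hl.trans h, hmem, hprod⟩

lemma iwb_mul {m n : ℕ} {g h : G} (hg : InWordBall S m g) (hh : InWordBall S n h) :
    InWordBall S (m + n) (g * h) := by
  obtain ⟨l, hl, hmem, hprod⟩ := hg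
  obtain ⟨l', hl', hmem', hprod'⟩ := hh
  refine ⟨l ++ l', ?_, ?_, ?_⟩
  · simpa using Nat.add_le_add hl hl'
  · intro x hx
    rcases List.mem_append.mp hx with h | h
    · exact hmem x h
    · exact hmem' x h
  · simp [hprod, hprod']

lemma iwb_mem {g : G} (h : g ∈ S) : InWordBall S 1 g :=
  ⟨[g], by simp, by simpa using Or.inl h, by simp⟩

lemma iwb_inv_mem {g : G} (h : g ∈ S) : InWordBall S 1 g⁻¹ :=
  ⟨[g⁻¹], by simp, by simpa using Or.inr h, by simp⟩

lemma iwb_pow {g : G} (h : g ∈ S) (n : ℕ) : InWordBall S n (g ^ n) := by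
  refine ⟨List.replicate n g, by simp, ?_, by simp⟩
  intro x hx
  rw [List.eq_of_mem_replicate hx]
  exact Or.inl h

lemma iwb_inv_pow {g : G} (h : g ∈ S) (n : ℕ) : InWordBall S n (g⁻¹ ^ n) := by
  refine ⟨List.replicate n g⁻¹, by simp, ?_, by simp⟩
  intro x hx
  rw [List.eq_of_mem_replicate hx]
  exact Or.inr (by simpa using h)

lemma iwb_zpow {g : G} (h : g ∈ S) (z : ℤ) : InWordBall S z.natAbs (g ^ z) := by
  rcases Int.natAbs_eq z with hz | hz
  · have e : g ^ z = g ^ z.natAbs := by nth_rewrite 1 [hz]; rw [zpow_natCast]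
    rw [e]
    exact iwb_pow h _
  · have e : g ^ z = g⁻¹ ^ z.natAbs := by
      nth_rewrite 1 [hz]; rw [zpow_neg, ← inv_zpow, zpow_natCast]
    rw [e]
    exact iwb_inv_pow h _

lemma iwb_list_prod {c : ℕ} (l : List G) (h : ∀ x ∈ l, InWordBall S c x) :
    InWordBall S (c * l.length) l.prod := by
  induction l with
  | nil => simpa using iwb_one 0
  | cons x xs ih =>
    have hx := h x (List.mem_cons_self)
    have hxs := ih (fun y hy => h y (List.mem_cons_of_mem x hy))
    have h2 := iwb_mul hx hxs
    rw [List.prod_cons]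
    refine iwb_mono (le_of_eq ?_) h2
    rw [List.length_cons, Nat.mul_succ, Nat.add_comm]

end IWB

/-! ### Membership of the generators and letter lemmas -/

lemma tE_mem : tE ∈ (Sgen : Set SB) := by simp [Sgen]
lemma sE_mem : sE ∈ (Sgen : Set SB) := by simp [Sgen]
lemma s'E_mem : s'E ∈ (Sgen : Set SB) := by simp [Sgen]

lemma psi1'_of_true : psi1' ga = tE := rfl
lemma psi1'_of_false : psi1' gb = sE * tE := by
  simp [sE, tE]

lemma psi2'_of_false : psi2' gb = s'E * psi2' ga := by
  simp [s'E]

/-- `psi2' ga = tE` since both are `(a, a)`. -/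
lemma psi2'_ga : psi2' ga = tE := by
  apply Subtype.ext
  show psi2 ga = psi1 ga
  simp [psi1, psi2, ga]

/-- Each letter of a standard word contributes at most 2 generators via `psi1'`. -/
lemma letter1 {x : G2} (hx : x ∈ stdGens ∨ x⁻¹ ∈ stdGens) :
    InWordBall (Sgen : Set SB) 2 (psi1' x.1) := by
  rcases hx with hx | hx
  · simp only [stdGens, Set.mem_insert_iff, Set.mem_singleton_iff] at hx
    rcases hx with h | h | h | h <;> subst h
    · exact iwb_mono one_le_two (iwb_mem tE_mem)
    · have e : psi1' (FreeGroup.of false, (1 : F2)).1 = sE * tE := psi1'_of_false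
      rw [e]
      exact iwb_mul (iwb_mem sE_mem) (iwb_mem tE_mem)
    · have e : psi1' ((1 : F2), FreeGroup.of true).1 = 1 := map_one psi1'
      rw [e]; exact iwb_one 2
    · have e : psi1' ((1 : F2), FreeGroup.of false).1 = 1 := map_one psi1'
      rw [e]; exact iwb_one 2
  · simp only [stdGens, Set.mem_insert_iff, Set.mem_singleton_iff] at hx
    have hxe : x = (x⁻¹)⁻¹ := (inv_inv x).symm
    rcases hx with h | h | h | h <;> rw [hxe, h]
    · have e : psi1' (((FreeGroup.of true, (1 : F2)))⁻¹).1 = tE⁻¹ := by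
        rw [show (((FreeGroup.of true, (1 : F2)))⁻¹).1 = ga⁻¹ from rfl, map_inv, psi1'_of_true]
      rw [e]
      exact iwb_mono one_le_two (iwb_inv_mem tE_mem)
    · have e : psi1' (((FreeGroup.of false, (1 : F2)))⁻¹).1 = tE⁻¹ * sE⁻¹ := by
        rw [show (((FreeGroup.of false, (1 : F2)))⁻¹).1 = gb⁻¹ from rfl, map_inv,
          psi1'_of_false, mul_inv_rev]
      rw [e]
      exact iwb_mul (iwb_inv_mem tE_mem) (iwb_inv_mem sE_mem)
    · have e : psi1' ((((1 : F2), FreeGroup.of true))⁻¹).1 = 1 := by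
        rw [show ((((1 : F2), FreeGroup.of true))⁻¹).1 = (1 : F2) from rfl, map_one]
      rw [e]; exact iwb_one 2
    · have e : psi1' ((((1 : F2), FreeGroup.of false))⁻¹).1 = 1 := by
        rw [show ((((1 : F2), FreeGroup.of false))⁻¹).1 = (1 : F2) from rfl, map_one]
      rw [e]; exact iwb_one 2

lemma letter2 {x : G2} (hx : x ∈ stdGens ∨ x⁻¹ ∈ stdGens) :
    InWordBall (Sgen : Set SB) 2 (psi2' x.2) := by
  rcases hx with hx | hx
  · simp only [stdGens, Set.mem_insert_iff, Set.mem_singleton_iff] at hx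
    rcases hx with h | h | h | h <;> subst h
    · have e : psi2' (FreeGroup.of true, (1 : F2)).2 = 1 := map_one psi2'
      rw [e]; exact iwb_one 2
    · have e : psi2' (FreeGroup.of false, (1 : F2)).2 = 1 := map_one psi2'
      rw [e]; exact iwb_one 2
    · have e : psi2' ((1 : F2), FreeGroup.of true).2 = tE := psi2'_ga
      rw [e]
      exact iwb_mono one_le_two (iwb_mem tE_mem)
    · have e : psi2' ((1 : F2), FreeGroup.of false).2 = s'E * tE := by
        rw [show ((1 : F2), FreeGroup.of false).2 = gb from rfl, psi2'_of_false, psi2'_ga]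
      rw [e]
      exact iwb_mul (iwb_mem s'E_mem) (iwb_mem tE_mem)
  · simp only [stdGens, Set.mem_insert_iff, Set.mem_singleton_iff] at hx
    have hxe : x = (x⁻¹)⁻¹ := (inv_inv x).symm
    rcases hx with h | h | h | h <;> rw [hxe, h]
    · have e : psi2' (((FreeGroup.of true, (1 : F2)))⁻¹).2 = 1 := by
        rw [show (((FreeGroup.of true, (1 : F2)))⁻¹).2 = (1 : F2) from rfl, map_one]
      rw [e]; exact iwb_one 2
    · have e : psi2' (((FreeGroup.of false, (1 : F2)))⁻¹).2 = 1 := by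
        rw [show (((FreeGroup.of false, (1 : F2)))⁻¹).2 = (1 : F2) from rfl, map_one]
      rw [e]; exact iwb_one 2
    · have e : psi2' ((((1 : F2), FreeGroup.of true))⁻¹).2 = tE⁻¹ := by
        rw [show ((((1 : F2), FreeGroup.of true))⁻¹).2 = ga⁻¹ from rfl, map_inv, psi2'_ga]
      rw [e]
      exact iwb_mono one_le_two (iwb_inv_mem tE_mem)
    · have e : psi2' ((((1 : F2), FreeGroup.of false))⁻¹).2 = tE⁻¹ * s'E⁻¹ := by
        rw [show ((((1 : F2), FreeGroup.of false))⁻¹).2 = gb⁻¹ from rfl, map_inv,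
          psi2'_of_false, psi2'_ga, mul_inv_rev]
      rw [e]
      exact iwb_mul (iwb_inv_mem tE_mem) (iwb_inv_mem s'E_mem)

/-- The `phi2`-value of a letter is bounded by 1 in absolute value. -/
lemma letter_phi {x : G2} (hx : x ∈ stdGens ∨ x⁻¹ ∈ stdGens) :
    (Multiplicative.toAdd (phi2 x.1)).natAbs ≤ 1 := by
  rcases hx with hx | hx
  · simp only [stdGens, Set.mem_insert_iff, Set.mem_singleton_iff] at hx
    rcases hx with h | h | h | h <;> subst h <;> simp [phi2_of]
  · simp only [stdGens, Set.mem_insert_iff, Set.mem_singleton_iff] at hx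
    have hxe : x = (x⁻¹)⁻¹ := (inv_inv x).symm
    rcases hx with h | h | h | h <;> rw [hxe, h] <;>
      simp [phi2_of]

/-- Bound on `phi2` of a product of letters. -/
lemma phi_bound (l : List G2) (h : ∀ x ∈ l, x ∈ stdGens ∨ x⁻¹ ∈ stdGens) :
    (Multiplicative.toAdd (phi2 (l.prod).1)).natAbs ≤ l.length := by
  induction l with
  | nil => simp
  | cons x xs ih =>
    have hx := letter_phi (h x (List.mem_cons_self))
    have hxs := ih (fun y hy => h y (List.mem_cons_of_mem x hy))
    calc (Multiplicative.toAdd (phi2 ((x :: xs).prod).1)).natAbs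
        = (Multiplicative.toAdd (phi2 x.1) + Multiplicative.toAdd (phi2 (xs.prod).1)).natAbs := by
          rw [List.prod_cons]
          simp [Prod.fst_mul, map_mul]
      _ ≤ (Multiplicative.toAdd (phi2 x.1)).natAbs
            + (Multiplicative.toAdd (phi2 (xs.prod).1)).natAbs := Int.natAbs_add_le _ _
      _ ≤ 1 + xs.length := Nat.add_le_add hx hxs
      _ = (x :: xs).length := by rw [List.length_cons, Nat.add_comm]

/-! ### The key decomposition -/

lemma coe_tE : ((tE : SB) : G2) = psi1 ga := rfl

/-- Every element of `SB` decomposes as `psi1' u * tE^{-k} * psi2' v`. -/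
lemma decomposition (γ : SB) :
    γ = psi1' (γ : G2).1 * tE ^ (-(Multiplicative.toAdd (phi2 (γ : G2).1)))
        * psi2' (γ : G2).2 := by
  obtain ⟨⟨u, v⟩, hγ⟩ := γ
  have hk : phi2 u = phi2 v := mem_SB.mp hγ
  apply Subtype.ext
  rw [Subgroup.coe_mul, Subgroup.coe_mul, SubgroupClass.coe_zpow, coe_tE, coe_psi1', coe_psi2']
  set k : ℤ := Multiplicative.toAdd (phi2 u) with hkdef
  have h1 : psi1 u = (u, ga ^ k) := Prod.ext (fst_psi1 u) (snd_psi1 u)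
  have hga : psi1 ga = (ga, ga) := by
    refine Prod.ext (fst_psi1 ga) ?_
    rw [snd_psi1, ga, phi2_of]
    simp
  have h2 : psi2 v = (ga ^ k, v) := by
    refine Prod.ext ?_ (snd_psi2 v)
    rw [fst_psi2, ← hk]
  show ((u, v) : G2) = _
  rw [h1, hga, h2]
  refine Prod.ext ?_ ?_
  · show u = u * ga ^ (-k) * ga ^ k
    rw [mul_assoc, ← zpow_add, neg_add_cancel, zpow_zero, mul_one]
  · show v = ga ^ k * ga ^ (-k) * v
    rw [← zpow_add, add_neg_cancel, zpow_zero, one_mul]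

/-- `SB` is generated by the three elements. -/
lemma closure_Sgen : Subgroup.closure (Sgen : Set SB) = ⊤ := by
  rw [eq_top_iff]
  intro γ _
  have h1 : ∀ u : F2, psi1' u ∈ Subgroup.closure (Sgen : Set SB) := by
    intro u
    induction u using FreeGroup.induction_on with
    | C1 => exact one_mem _
    | of i =>
      cases i
      · show psi1' gb ∈ Subgroup.closure (Sgen : Set SB)
        rw [psi1'_of_false]
        exact mul_mem (Subgroup.subset_closure sE_mem) (Subgroup.subset_closure tE_mem)
      · exact Subgroup.subset_closure tE_mem
    | inv_of i h => rw [map_inv]; exact inv_mem h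
    | mul x y hx hy => rw [map_mul]; exact mul_mem hx hy
  have h2 : ∀ v : F2, psi2' v ∈ Subgroup.closure (Sgen : Set SB) := by
    intro v
    induction v using FreeGroup.induction_on with
    | C1 => exact one_mem _
    | of i =>
      cases i
      · show psi2' gb ∈ Subgroup.closure (Sgen : Set SB)
        rw [psi2'_of_false, psi2'_ga]
        exact mul_mem (Subgroup.subset_closure s'E_mem) (Subgroup.subset_closure tE_mem)
      · show psi2' ga ∈ Subgroup.closure (Sgen : Set SB)
        rw [psi2'_ga]
        exact Subgroup.subset_closure tE_mem
    | inv_of i h => rw [map_inv]; exact inv_mem h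
    | mul x y hx hy => rw [map_mul]; exact mul_mem hx hy
  rw [decomposition γ]
  exact mul_mem (mul_mem (h1 _) (zpow_mem (Subgroup.subset_closure tE_mem) _)) (h2 _)

end SBAux

open SBAux in
/-- `Γ` is finitely generated and undistorted in `F₂ × F₂`. -/
theorem stmt_17 :
    SB.FG ∧
    ∃ (S : Finset SB) (C : ℕ), 1 ≤ C ∧
      Subgroup.closure (S : Set SB) = ⊤ ∧
      ∀ (γ : SB) (n : ℕ),
        InWordBall stdGens n (γ : FreeGroup Bool × FreeGroup Bool) →
        InWordBall (S : Set SB) (C * n + C) γ := by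
  constructor
  · -- finite generation
    rw [Subgroup.fg_iff]
    refine ⟨(↑) '' (Sgen : Set SB), ?_, Set.Finite.image _ (Sgen.finite_toSet)⟩
    have e : Subtype.val '' (Sgen : Set SB) = ⇑SB.subtype '' (Sgen : Set SB) := rfl
    rw [e, ← MonoidHom.map_closure, closure_Sgen, ← MonoidHom.range_eq_map,
      Subgroup.range_subtype]
  · refine ⟨Sgen, 7, by norm_num, closure_Sgen, ?_⟩
    intro γ n hγ
    obtain ⟨l, hl, hmem, hprod⟩ := hγ
    set u : F2 := (γ : G2).1 with hu
    set v : F2 := (γ : G2).2 with hv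
    set k : ℤ := Multiplicative.toAdd (phi2 u) with hk
    have hkb : k.natAbs ≤ n := by
      have hb := phi_bound l hmem
      rw [hprod] at hb
      exact hb.trans hl
    have hfst : u = (l.map Prod.fst).prod := by
      rw [hu, ← hprod]
      exact MonoidHom.map_list_prod (MonoidHom.fst F2 F2) l
    have hsnd : v = (l.map Prod.snd).prod := by
      rw [hv, ← hprod]
      exact MonoidHom.map_list_prod (MonoidHom.snd F2 F2) l
    have h1 : InWordBall (Sgen : Set SB) (2 * n) (psi1' u) := by
      rw [hfst, MonoidHom.map_list_prod]
      have hb := iwb_list_prod (S := (Sgen : Set SB)) (c := 2)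
        ((l.map Prod.fst).map psi1') ?_
      · refine iwb_mono ?_ hb
        simp only [List.length_map]
        omega
      · intro x hx
        simp only [List.mem_map] at hx
        obtain ⟨z, hz1, rfl⟩ := hx
        obtain ⟨y, hy1, rfl⟩ := hz1
        exact letter1 (hmem y hy1)
    have h2 : InWordBall (Sgen : Set SB) (2 * n) (psi2' v) := by
      rw [hsnd, MonoidHom.map_list_prod]
      have hb := iwb_list_prod (S := (Sgen : Set SB)) (c := 2)
        ((l.map Prod.snd).map psi2') ?_
      · refine iwb_mono ?_ hb
        simp only [List.length_map]
        omega
      · intro x hx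
        simp only [List.mem_map] at hx
        obtain ⟨z, hz1, rfl⟩ := hx
        obtain ⟨y, hy1, rfl⟩ := hz1
        exact letter2 (hmem y hy1)
    have ht : InWordBall (Sgen : Set SB) n (tE ^ (-k)) := by
      refine iwb_mono ?_ (iwb_zpow tE_mem (-k))
      simpa using hkb
    rw [decomposition γ, ← hu, ← hv, ← hk]
    refine iwb_mono ?_ (iwb_mul (iwb_mul h1 ht) h2)
    omega
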